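/- The truncated fixed point p₊ = (m₊, λ₊) with m₊ = -(23-√34)/33 and λ₊ = (328-8√34)/(11979π²) satisfies η(m₊, λ₊) ≠ 0 and λ₊π²/(1+m₊)² ≠ 1, where η = 4λπ²/((1+m)² - λπ²); hence p₊ violates the Ward constraint. -/

import Mathlib

open Real

/-- The truncated fixed point `p₊ = (m₊, λ₊)` with `m₊ = -(23-√34)/33` and
`λ₊ = (328-8√34)/(11979π²)` satisfies `η(p₊) ≠ 0` and `λ₊π²/(1+m₊)² ≠ 1`,
hence violates the Ward constraint. -/
theorem p_plus_violates_ward :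
    let m : ℝ := -(23 - Real.sqrt 34) / 33
    let l : ℝ := (328 - 8 * Real.sqrt 34) / (11979 * π ^ 2)
    4 * l * π ^ 2 / ((1 + m) ^ 2 - l * π ^ 2) ≠ 0 ∧
      l * π ^ 2 / (1 + m) ^ 2 ≠ 1 := by
  intro m l
  have hπ2 : (0:ℝ) < π ^ 2 := by positivity
  set s := Real.sqrt 34 with hs
  have hs0 : 0 ≤ s := Real.sqrt_nonneg 34
  have hs2 : s ^ 2 = 34 := Real.sq_sqrt (by norm_num)
  have hs6 : s < 6 := by nlinarith
  have hs5 : 5 < s := by nlinarith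
  have hl : l * π ^ 2 = (328 - 8 * s) / 11979 := by
    simp only [l]
    field_simp
    rw [hs]
  have hm : (1 + m) ^ 2 = (134 + 20 * s) / 1089 := by
    simp only [m]
    field_simp
    ring_nf
    nlinarith [hs2]
  have hlpos : 0 < l * π ^ 2 := by rw [hl]; nlinarith
  have hden : 0 < (1 + m) ^ 2 - l * π ^ 2 := by rw [hl, hm]; nlinarith
  constructor
  · have hnum : 0 < 4 * l * π ^ 2 := by nlinarith
    exact ne_of_gt (div_pos hnum hden)
  · intro h
    have h2 : l * π ^ 2 = (1 + m) ^ 2 := by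
      have hm0 : (1 + m) ^ 2 ≠ 0 := by nlinarith
      field_simp at h
      exact (div_eq_one_iff_eq hm0).mp h
    rw [hl, hm] at h2
    nlinarith
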